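/- Let f : G → H be a continuous homomorphism of topological groups. If the identity of H is the intersection of countably many open sets, then the kernel of f is a normal admissible subgroup of G. -/

import Mathlib

open Topology TopologicalSpace Pointwise Function Set

/-- A subset N of a topological group is an admissible subgroup if it is the intersection of a
sequence of open symmetric neighborhoods of the identity with Uₙ₊₁·Uₙ₊₁ ⊆ Uₙ. -/
def IsAdmissible {G : Type*} [Group G] [TopologicalSpace G] (N : Set G) : Prop :=
  ∃ U : ℕ → Set G,
    (∀ n, IsOpen (U n) ∧ (1 : G) ∈ U n ∧ (U n)⁻¹ = U n) ∧
    (∀ n, U (n + 1) * U (n + 1) ⊆ U n) ∧ N = ⋂ n, U n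

lemma aux_pick {H : Type*} [Group H] [TopologicalSpace H] [IsTopologicalGroup H]
    (O : Set H) (hO : IsOpen O) (h1 : (1 : H) ∈ O) :
    ∃ S : Set H, IsOpen S ∧ (1 : H) ∈ S ∧ S⁻¹ = S ∧ S * S ⊆ O := by
  obtain ⟨S, hSo, hS1, hSS⟩ := exists_open_nhds_one_mul_subset (hO.mem_nhds h1)
  refine ⟨S ∩ S⁻¹, hSo.inter hSo.inv, ⟨hS1, by simpa using hS1⟩, ?_, ?_⟩
  · rw [Set.inter_inv, inv_inv, Set.inter_comm]
  · exact (Set.mul_subset_mul Set.inter_subset_left Set.inter_subset_left).trans hSS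

/-- The kernel of a continuous homomorphism of topological groups whose codomain has
countable pseudocharacter at the identity is a normal admissible subgroup. -/
theorem statement8 {G H : Type*} [Group G] [TopologicalSpace G] [IsTopologicalGroup G]
    [Group H] [TopologicalSpace H] [IsTopologicalGroup H]
    (f : G →* H) (hf : Continuous f)
    (hH : ∃ V : ℕ → Set H, (∀ n, IsOpen (V n)) ∧ ({(1 : H)} : Set H) = ⋂ n, V n) :
    f.ker.Normal ∧ IsAdmissible (f.ker : Set G) := by
  refine ⟨f.normal_ker, ?_⟩
  obtain ⟨V, hVopen, hV⟩ := hH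
  have h1V : ∀ n, (1 : H) ∈ V n := by
    intro n
    have : (1 : H) ∈ ⋂ n, V n := hV ▸ Set.mem_singleton 1
    exact Set.mem_iInter.1 this n
  classical
  let pick : Set H → Set H := fun O =>
    if h : IsOpen O ∧ (1 : H) ∈ O then Classical.choose (aux_pick O h.1 h.2) else Set.univ
  have hpick : ∀ O : Set H, IsOpen O → (1 : H) ∈ O →
      IsOpen (pick O) ∧ (1 : H) ∈ pick O ∧ (pick O)⁻¹ = pick O ∧ pick O * pick O ⊆ O := by
    intro O hO h1
    simp only [pick, dif_pos (And.intro hO h1)]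
    exact Classical.choose_spec (aux_pick O hO h1)
  let W : ℕ → Set H := fun n => Nat.rec (pick (V 0)) (fun n Wn => pick (Wn ∩ V (n + 1))) n
  have hW : ∀ n, IsOpen (W n) ∧ (1 : H) ∈ W n ∧ (W n)⁻¹ = W n ∧ W n ⊆ V n ∧
      (∀ m, n = m + 1 → W n * W n ⊆ W m) := by
    intro n
    induction n with
    | zero =>
      obtain ⟨ho, h1, hs, hm⟩ := hpick (V 0) (hVopen 0) (h1V 0)
      refine ⟨ho, h1, hs, fun x hx => hm ⟨x, hx, 1, h1, mul_one x⟩, fun m hm' => by omega⟩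
    | succ n ih =>
      obtain ⟨ho', h1', _, _⟩ := ih
      have hOI : IsOpen (W n ∩ V (n + 1)) := ho'.inter (hVopen (n + 1))
      have h1I : (1 : H) ∈ W n ∩ V (n + 1) := ⟨h1', h1V (n + 1)⟩
      obtain ⟨ho, h1, hs, hm⟩ := hpick (W n ∩ V (n + 1)) hOI h1I
      have hsub : W (n + 1) ⊆ W n ∩ V (n + 1) := fun x hx => hm ⟨x, hx, 1, h1, mul_one x⟩
      refine ⟨ho, h1, hs, fun x hx => (hsub hx).2, ?_⟩
      rintro m h
      obtain rfl : m = n := by omega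
      exact fun x hx => (hm hx).1
  have hWinter : (⋂ n, W n) = ({(1 : H)} : Set H) := by
    apply Set.Subset.antisymm
    · rw [hV]
      exact Set.iInter_mono fun n => (hW n).2.2.2.1
    · intro x hx
      rw [Set.mem_singleton_iff] at hx
      subst hx
      exact Set.mem_iInter.2 fun n => (hW n).2.1
  refine ⟨fun n => f ⁻¹' W n, fun n => ⟨(hW n).1.preimage hf, ?_, ?_⟩, ?_, ?_⟩
  · simpa using (hW n).2.1
  · ext x
    simp only [Set.mem_inv, Set.mem_preimage, map_inv]
    conv_lhs => rw [← (hW n).2.2.1]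
    simp
  · intro n
    rw [Set.mul_subset_iff]
    intro x hx y hy
    have : f x * f y ∈ W (n + 1) * W (n + 1) := Set.mul_mem_mul hx hy
    have := (hW (n + 1)).2.2.2.2 n rfl this
    simpa [Set.mem_preimage, map_mul] using this
  · ext x
    simp only [SetLike.mem_coe, MonoidHom.mem_ker, Set.mem_iInter, Set.mem_preimage]
    constructor
    · intro h n
      rw [h]; exact (hW n).2.1
    · intro h
      have : f x ∈ ⋂ n, W n := Set.mem_iInter.2 h
      rw [hWinter] at this
      exact this
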